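/- Let eip be defined with α=1, β=−1, ξ=0, f additive in each argument on S, and g arbitrary. Then eip is additive with respect to the timestamp-merging addition ⊕: for all A, B, C ∈ U* (such that A ⊕ B ∈ U*), eip(A ⊕ B, C) = eip(A, C) + eip(B, C). -/

import Mathlib

noncomputable section

/-- A discrete time series is represented as a list of (timestamp, value) pairs,
stored in strictly *decreasing* timestamp order (head = last sample).
`IsTS` says timestamps strictly decrease along the list and no spatial value is zero,
i.e. the list represents an element of `U*` (the empty list being `Ω`). -/
def IsTS {S : Type*} [Zero S] (l : List (ℝ × S)) : Prop :=
  l.Chain' (fun x y => y.1 < x.1) ∧ ∀ p ∈ l, p.2 ≠ (0 : S)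

/-- The recursive elastic product with parameters `α β ξ` and functions `f`, `g`:
`ep(A₁ᵖ,B₁ᵠ) = α·ep(A₁ᵖ⁻¹,B₁ᵠ) + β·ep(A₁ᵖ⁻¹,B₁ᵠ⁻¹) + f(a(p),b(q))·g(t_{a(p)},t_{b(q)}) + α·ep(A₁ᵖ,B₁ᵠ⁻¹)`
with base case `ep(A,Ω) = ep(Ω,B) = ξ`. -/
def ep {S : Type*} (f : S → S → ℝ) (g : ℝ → ℝ → ℝ) (α β ξ : ℝ) :
    List (ℝ × S) → List (ℝ × S) → ℝ
  | [], _ => ξ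
  | _ :: _, [] => ξ
  | (t, a) :: A, (u, b) :: B =>
      α * ep f g α β ξ A ((u, b) :: B) + β * ep f g α β ξ A B
        + f a b * g t u + α * ep f g α β ξ ((t, a) :: A) B
  termination_by A B => A.length + B.length


open Classical in
/-- The timestamp-merging addition `⊕`: merge the two series by timestamps, adding the
spatial values at coinciding timestamps and deleting resulting zero values. -/
def tsAdd {S : Type*} [AddCommGroup S] :
    List (ℝ × S) → List (ℝ × S) → List (ℝ × S)
  | [], l => l
  | l, [] => l
  | (t, a) :: A, (u, b) :: B =>
      if u < t then (t, a) :: tsAdd A ((u, b) :: B)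
      else if t < u then (u, b) :: tsAdd ((t, a) :: A) B
      else if a + b = 0 then tsAdd A B
      else (t, a + b) :: tsAdd A B
  termination_by A B => A.length + B.length


open Classical in
/-- Scalar multiplication `⊗`: scale every spatial value, deleting everything if `λ = 0`. -/
def tsSmul {S : Type*} [AddCommGroup S] [Module ℝ S] (r : ℝ) (l : List (ℝ × S)) :
    List (ℝ × S) :=
  if r = 0 then [] else l.map fun p => (p.1, r • p.2)

/-- `ip` is an inner product on `(U*, ⊕, ⊗)`: symmetric, bilinear
(linearity in the first argument together with symmetry), and positive definite. -/
structure IsInnerOnTS {S : Type*} [AddCommGroup S] [Module ℝ S]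
    (ip : List (ℝ × S) → List (ℝ × S) → ℝ) : Prop where
  symm : ∀ A B, IsTS A → IsTS B → ip A B = ip B A
  add_left : ∀ A B C, IsTS A → IsTS B → IsTS C → ip (tsAdd A B) C = ip A C + ip B C
  smul_left : ∀ (r : ℝ) A B, IsTS A → IsTS B → ip (tsSmul r A) B = r * ip A B
  nonneg : ∀ A, IsTS A → 0 ≤ ip A A
  definite : ∀ A, IsTS A → (ip A A = 0 ↔ A = [])



private lemma ep_closed {S : Type*} (f : S → S → ℝ) (g : ℝ → ℝ → ℝ) :
    ∀ A C : List (ℝ × S),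
      ep f g 1 (-1) 0 A C
        = (A.map fun p => (C.map fun q => f p.2 q.2 * g p.1 q.1).sum).sum := by
  intro A C
  induction A, C using ep.induct with
  | case1 C => simp [ep]
  | case2 x A => simp [ep]
  | case3 t a A u b B ih1 ih2 ih3 =>
      rw [ep, ih1, ih2, ih3]
      simp [List.map_cons, List.sum_cons]
      ring

private lemma sum_tsAdd {S : Type*} [AddCommGroup S] (F : ℝ × S → ℝ)
    (hF0 : ∀ t, F (t, 0) = 0)
    (hFadd : ∀ t a b, F (t, a + b) = F (t, a) + F (t, b)) :
    ∀ A B : List (ℝ × S),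
      ((tsAdd A B).map F).sum = (A.map F).sum + (B.map F).sum := by
  intro A B
  induction A, B using tsAdd.induct with
  | case1 l => simp [tsAdd]
  | case2 l h => cases l with
      | nil => simp [tsAdd]
      | cons x xs => simp [tsAdd]
  | case3 t a A u b B h ih =>
      rw [tsAdd]; simp only [if_pos h, List.map_cons, List.sum_cons, ih]; ring
  | case4 t a A u b B h1 h2 ih =>
      rw [tsAdd]; simp only [if_neg h1, if_pos h2, List.map_cons, List.sum_cons, ih]; ring
  | case5 t a A u b B h1 h2 h3 ih =>
      rw [tsAdd]; simp only [if_neg h1, if_neg h2, if_pos h3, ih, List.map_cons,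
        List.sum_cons]
      have htu : t = u := le_antisymm (not_lt.mp h1) (not_lt.mp h2)
      subst htu
      have := hFadd t a b
      rw [h3, hF0 t] at this
      linarith
  | case6 t a A u b B h1 h2 h3 ih =>
      rw [tsAdd]; simp only [if_neg h1, if_neg h2, if_neg h3, List.map_cons,
        List.sum_cons, ih, hFadd]
      have htu : t = u := le_antisymm (not_lt.mp h1) (not_lt.mp h2)
      subst htu
      ring

/-- with `α = 1`, `β = -1`, `ξ = 0` and `f` additive in each argument,
`eip` is additive with respect to the timestamp-merging addition `⊕`:
`eip(A ⊕ B, C) = eip(A, C) + eip(B, C)`. -/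
theorem eip_additive
    {S : Type*} [AddCommGroup S] [Module ℝ S]
    (f : S → S → ℝ) (g : ℝ → ℝ → ℝ)
    (hf_add_left : ∀ a b c : S, f (a + b) c = f a c + f b c)
    (hf_add_right : ∀ a b c : S, f a (b + c) = f a b + f a c) :
    ∀ A B C : List (ℝ × S), IsTS A → IsTS B → IsTS C →
      ep f g 1 (-1) 0 (tsAdd A B) C
        = ep f g 1 (-1) 0 A C + ep f g 1 (-1) 0 B C := by
  intro A B C _ _ _
  have hf0 : ∀ c : S, f 0 c = 0 := by
    intro c
    have := hf_add_left 0 0 c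
    simpa using this.symm
  rw [ep_closed, ep_closed, ep_closed]
  exact sum_tsAdd _ (fun t => by simp [hf0])
    (fun t a b => by
      simp only [hf_add_left, add_mul]
      rw [← List.sum_map_add]) A B

end
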